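/- Define, for t > 0 and x ∈ ℝ³ with x ≠ 0, φ(t,x) := (2π^{3/2})^{-1} |x|^{-1} ∫₀^{|x|/(2√t)} e^{-ρ²} dρ, and for i,j ∈ {1,2,3} the Oseen tensor T_{ij}(t,x) := H(t,x) δ_{ij} + ∂_{x_i}∂_{x_j} φ(t,x). Then there exists a constant c > 0 such that for all t > 0, all x ∈ ℝ³ with x ≠ 0, and all i, j, |T_{ij}(t,x)| ≤ c (|x| + t^{1/2})^{-3}. -/

import Mathlib

open MeasureTheory

/-- The heat kernel on `ℝ³`. -/
noncomputable def heatKernel (s : ℝ) (z : EuclideanSpace ℝ (Fin 3)) : ℝ :=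
  (4 * Real.pi * s) ^ (-(3:ℝ)/2) * Real.exp (-‖z‖ ^ 2 / (4 * s))

/-- The potential `φ(t,x) = (2π^{3/2})⁻¹ |x|⁻¹ ∫₀^{|x|/(2√t)} e^{-ρ²} dρ`. -/
noncomputable def oseenPhi (t : ℝ) (x : EuclideanSpace ℝ (Fin 3)) : ℝ :=
  (2 * Real.pi ^ ((3:ℝ)/2))⁻¹ * ‖x‖⁻¹ *
    ∫ ρ in Set.Ioo (0:ℝ) (‖x‖ / (2 * Real.sqrt t)), Real.exp (-ρ ^ 2)

/-- The Oseen tensor `T_{ij}(t,x) = H(t,x) δ_{ij} + ∂_{x_i}∂_{x_j} φ(t,x)`. -/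
noncomputable def oseenT (t : ℝ) (x : EuclideanSpace ℝ (Fin 3)) (i j : Fin 3) : ℝ :=
  heatKernel t x * (if i = j then 1 else 0) +
    fderiv ℝ (fun z => fderiv ℝ (fun w => oseenPhi t w) z (EuclideanSpace.single j 1))
      x (EuclideanSpace.single i 1)


noncomputable def Egau (u : ℝ) : ℝ := ∫ ρ in Set.Ioo (0:ℝ) u, Real.exp (-ρ ^ 2)

lemma egau_eq {u : ℝ} (hu : 0 ≤ u) : Egau u = ∫ ρ in (0:ℝ)..u, Real.exp (-ρ ^ 2) := by
  rw [intervalIntegral.integral_of_le hu, MeasureTheory.integral_Ioc_eq_integral_Ioo, Egau]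

lemma egau_hasDerivAt {u : ℝ} (hu : 0 < u) : HasDerivAt Egau (Real.exp (-u ^ 2)) u := by
  have h : HasDerivAt (fun v => ∫ ρ in (0:ℝ)..v, Real.exp (-ρ ^ 2)) (Real.exp (-u ^ 2)) u := by
    refine intervalIntegral.integral_hasDerivAt_right ?_ ?_ ?_
    · exact (Continuous.intervalIntegrable (by continuity) _ _)
    · exact (Continuous.stronglyMeasurableAtFilter (by continuity) _ _)
    · exact (Continuous.continuousAt (by continuity))
  refine h.congr_of_eventuallyEq ?_
  filter_upwards [Ioi_mem_nhds hu] with v hv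
  exact egau_eq (le_of_lt hv)

lemma egau_nonneg (u : ℝ) : 0 ≤ Egau u :=
  integral_nonneg fun ρ => (Real.exp_pos _).le

lemma egau_le_one (u : ℝ) : Egau u ≤ 1 := by
  have h1 : Egau u ≤ ∫ ρ in Set.Ioi (0:ℝ), Real.exp (-ρ ^ 2) := by
    refine setIntegral_mono_set ?_ ?_ ?_
    · have := integrable_exp_neg_mul_sq (one_pos)
      simpa using this.integrableOn
    · filter_upwards with ρ using (Real.exp_pos _).le
    · exact Filter.Eventually.of_forall Set.Ioo_subset_Ioi_self
  have h2 : ∫ ρ in Set.Ioi (0:ℝ), Real.exp (-ρ ^ 2) = Real.sqrt (Real.pi / 1) / 2 := by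
    rw [← integral_gaussian_Ioi 1]
    norm_num
  rw [h2] at h1
  refine h1.trans ?_
  rw [div_one]
  nlinarith [Real.sqrt_le_sqrt (le_of_lt Real.pi_lt_d2), Real.sq_sqrt (le_of_lt Real.pi_pos),
    Real.sqrt_nonneg Real.pi, Real.sq_sqrt (by norm_num : (3.15:ℝ) ≥ 0).le]


lemma cont_exp_neg_sq : Continuous fun ρ : ℝ => Real.exp (-ρ ^ 2) := by continuity

lemma vol_Ioo_lt {u : ℝ} : volume (Set.Ioo (0:ℝ) u) < ⊤ := by
  simp [Real.volume_Ioo]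

lemma egau_le_self {u : ℝ} (hu : 0 ≤ u) : Egau u ≤ u := by
  have h : Egau u ≤ ∫ _ρ in Set.Ioo (0:ℝ) u, (1:ℝ) := by
    refine setIntegral_mono_on ?_ ?_ measurableSet_Ioo ?_
    · exact cont_exp_neg_sq.integrableOn_Ioc.mono_set Set.Ioo_subset_Ioc_self
    · exact integrableOn_const vol_Ioo_lt.ne
    · intro ρ _; exact Real.exp_le_one_iff.2 (by nlinarith [sq_nonneg ρ])
  simpa [Real.volume_Ioo, ENNReal.toReal_ofReal hu, max_eq_left hu] using h

lemma egau_ge {u : ℝ} (hu : 0 ≤ u) : u * Real.exp (-u ^ 2) ≤ Egau u := by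
  have h : ∫ _ρ in Set.Ioo (0:ℝ) u, Real.exp (-u ^ 2) ≤ Egau u := by
    refine setIntegral_mono_on ?_ ?_ measurableSet_Ioo ?_
    · exact integrableOn_const vol_Ioo_lt.ne
    · exact cont_exp_neg_sq.integrableOn_Ioc.mono_set Set.Ioo_subset_Ioc_self
    · intro ρ hρ
      apply Real.exp_le_exp.2
      nlinarith [hρ.1, hρ.2]
  simpa [Real.volume_Ioo, ENNReal.toReal_ofReal hu, max_eq_left hu, mul_comm] using h


noncomputable def oC : ℝ := (2 * Real.pi ^ ((3:ℝ)/2))⁻¹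

noncomputable def fA (a s : ℝ) : ℝ := oC * ((Real.sqrt s)⁻¹ * Egau (Real.sqrt s / a))

noncomputable def fA' (a s : ℝ) : ℝ :=
  oC / 2 * (-(Real.sqrt s)⁻¹ ^ 3 * Egau (Real.sqrt s / a)
    + (Real.sqrt s)⁻¹ ^ 2 * a⁻¹ * Real.exp (-(Real.sqrt s / a) ^ 2))

noncomputable def fA'' (a s : ℝ) : ℝ :=
  oC / 2 * (3/2 * (Real.sqrt s)⁻¹ ^ 5 * Egau (Real.sqrt s / a)
    - 3/(2*a) * (Real.sqrt s)⁻¹ ^ 4 * Real.exp (-(Real.sqrt s / a) ^ 2)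
    - a⁻¹ ^ 3 * (Real.sqrt s)⁻¹ ^ 2 * Real.exp (-(Real.sqrt s / a) ^ 2))

lemma fA_hasDerivAt {a s : ℝ} (ha : 0 < a) (hs : 0 < s) :
    HasDerivAt (fA a) (fA' a s) s := by
  have hb : 0 < Real.sqrt s := Real.sqrt_pos.2 hs
  have h1 : HasDerivAt Real.sqrt (1/(2*Real.sqrt s)) s := Real.hasDerivAt_sqrt hs.ne'
  have h2 : HasDerivAt (fun s => Real.sqrt s / a) ((1/(2*Real.sqrt s))/a) s := h1.div_const a
  have h3 : HasDerivAt (fun s => Egau (Real.sqrt s / a))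
      (Real.exp (-(Real.sqrt s / a) ^ 2) * ((1/(2*Real.sqrt s))/a)) s :=
    (egau_hasDerivAt (by positivity)).comp s h2
  have h4 : HasDerivAt (fun s => (Real.sqrt s)⁻¹)
      (-(1/(2*Real.sqrt s)) / (Real.sqrt s) ^ 2) s := h1.inv hb.ne'
  have h5 := (h4.mul h3).const_mul oC
  refine h5.congr_deriv (Eq.symm ?_)
  unfold fA'
  have h6 : Real.sqrt s ≠ 0 := hb.ne'
  have h7 : Real.sqrt s ^ 2 = s := Real.sq_sqrt hs.le
  set b := Real.sqrt s with hbdef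

  have hb' : b ≠ 0 := h6
  field_simp

lemma fA'_hasDerivAt {a s : ℝ} (ha : 0 < a) (hs : 0 < s) :
    HasDerivAt (fA' a) (fA'' a s) s := by
  have hb : 0 < Real.sqrt s := Real.sqrt_pos.2 hs
  have h1 : HasDerivAt Real.sqrt (1/(2*Real.sqrt s)) s := Real.hasDerivAt_sqrt hs.ne'
  have h2 : HasDerivAt (fun s => Real.sqrt s / a) ((1/(2*Real.sqrt s))/a) s := h1.div_const a
  have h3 : HasDerivAt (fun s => Egau (Real.sqrt s / a))
      (Real.exp (-(Real.sqrt s / a) ^ 2) * ((1/(2*Real.sqrt s))/a)) s :=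
    (egau_hasDerivAt (by positivity)).comp s h2
  have h4 : HasDerivAt (fun s => (Real.sqrt s)⁻¹)
      (-(1/(2*Real.sqrt s)) / (Real.sqrt s) ^ 2) s := h1.inv hb.ne'
  have hexp : HasDerivAt (fun s => Real.exp (-(Real.sqrt s / a) ^ 2))
      (Real.exp (-(Real.sqrt s / a) ^ 2) * (-(2 * (Real.sqrt s / a) ^ 1 * ((1/(2*Real.sqrt s))/a)))) s := by
    exact HasDerivAt.exp ((h2.pow 2).neg)
  have hg1 : HasDerivAt (fun s => -(Real.sqrt s)⁻¹ ^ 3 * Egau (Real.sqrt s / a))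
      (-(3 * (Real.sqrt s)⁻¹ ^ 2 * (-(1/(2*Real.sqrt s)) / (Real.sqrt s) ^ 2)) * Egau (Real.sqrt s / a)
        + -(Real.sqrt s)⁻¹ ^ 3 * (Real.exp (-(Real.sqrt s / a) ^ 2) * ((1/(2*Real.sqrt s))/a))) s := by
    exact ((h4.pow 3).neg).mul h3
  have hg2 : HasDerivAt (fun s => (Real.sqrt s)⁻¹ ^ 2 * a⁻¹ * Real.exp (-(Real.sqrt s / a) ^ 2))
      ((2 * (Real.sqrt s)⁻¹ ^ 1 * (-(1/(2*Real.sqrt s)) / (Real.sqrt s) ^ 2)) * a⁻¹ * Real.exp (-(Real.sqrt s / a) ^ 2)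
        + (Real.sqrt s)⁻¹ ^ 2 * a⁻¹ *
          (Real.exp (-(Real.sqrt s / a) ^ 2) * (-(2 * (Real.sqrt s / a) ^ 1 * ((1/(2*Real.sqrt s))/a))))) s := by
    exact ((h4.pow 2).mul_const a⁻¹).mul hexp
  have h5 := (hg1.add hg2).const_mul (oC / 2)
  refine h5.congr_deriv (Eq.symm ?_)
  unfold fA''
  have h6 : Real.sqrt s ≠ 0 := hb.ne'
  have h7 : Real.sqrt s ^ 2 = s := Real.sq_sqrt hs.le
  set b := Real.sqrt s with hbdef

  have hb' : b ≠ 0 := h6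
  field_simp
  ring

lemma coord_le_norm (x : EuclideanSpace ℝ (Fin 3)) (i : Fin 3) : |x i| ≤ ‖x‖ := by
  rw [EuclideanSpace.norm_eq]
  rw [show |x i| = Real.sqrt (x i ^ 2) by rw [Real.sqrt_sq_eq_abs]]
  apply Real.sqrt_le_sqrt
  calc x i ^ 2 = ‖x i‖ ^ 2 := by rw [Real.norm_eq_abs, sq_abs]
    _ ≤ ∑ k : Fin 3, ‖x k‖ ^ 2 :=
      Finset.single_le_sum (f := fun k => ‖x k‖ ^ 2) (fun k _ => sq_nonneg _) (Finset.mem_univ i)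

lemma u3exp {u : ℝ} (hu : 0 ≤ u) : u^3 * Real.exp (-u^2) ≤ 1 := by
  have h1 : u ≤ Real.exp (u^2/3) := by
    nlinarith [Real.add_one_le_exp (u^2/3), sq_nonneg (u - 3/2), Real.exp_pos (u^2/3)]
  have h2 : u^3 ≤ Real.exp (u^2) := by
    calc u^3 ≤ Real.exp (u^2/3)^3 := by
          exact pow_le_pow_left₀ hu h1 3
      _ = Real.exp (u^2) := by
          rw [← Real.exp_nat_mul]
          ring_nf
  rw [Real.exp_neg]
  rw [mul_inv_le_iff₀ (Real.exp_pos _)]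
  simpa using h2

lemma one_sub_exp {u : ℝ} : 1 - Real.exp (-u^2) ≤ u^2 := by
  nlinarith [Real.add_one_le_exp (-u^2)]


lemma est_coreA {a u E e xi xj d1 d2 : ℝ} (ha : 0 < a) (hu : 0 < u)
    (he0 : 0 < e) (he1 : e ≤ 1) (h1me : 1 - e ≤ u^2) (hE0 : 0 ≤ E) (hE1 : E ≤ 1)
    (hEu : E ≤ u) (hue : u * e ≤ E) (hu3e : u^3 * e ≤ 1)
    (hxi : |xi| ≤ u*a) (hxj : |xj| ≤ u*a) (hd1 : |d1| ≤ 1) (hd2 : |d2| ≤ 1) :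
    |2*a⁻¹^3*e*d1 + (-(u*a)⁻¹^3*E + (u*a)⁻¹^2*a⁻¹*e)*d2
      + xi*xj*(3*(u*a)⁻¹^5*E - 3*a⁻¹*(u*a)⁻¹^4*e - 2*a⁻¹^3*(u*a)⁻¹^2*e)|
      ≤ 8 * a⁻¹^3 := by
  have hr : 0 < u*a := mul_pos hu ha
  have h2 : E - u*e ≤ u^3 := by nlinarith [mul_le_mul_of_nonneg_left h1me hu.le, hEu]
  have h0 : 0 ≤ E - u*e := by linarith
  have habs1 : |2*a⁻¹^3*e*d1| ≤ 2*a⁻¹^3*e := by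
    rw [abs_mul]
    calc |2*a⁻¹^3*e| * |d1| ≤ |2*a⁻¹^3*e| * 1 := by
          exact mul_le_mul_of_nonneg_left hd1 (abs_nonneg _)
      _ = 2*a⁻¹^3*e := by rw [mul_one, abs_of_pos (by positivity)]
  have hrw2 : -(u*a)⁻¹^3*E + (u*a)⁻¹^2*a⁻¹*e = -((u*a)⁻¹^3*(E - u*e)) := by
    field_simp
    ring
  have habs2 : |(-(u*a)⁻¹^3*E + (u*a)⁻¹^2*a⁻¹*e)*d2| ≤ (u*a)⁻¹^3*(E - u*e) := by
    rw [hrw2, abs_mul, abs_neg]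
    calc |(u*a)⁻¹^3*(E - u*e)| * |d2| ≤ |(u*a)⁻¹^3*(E - u*e)| * 1 :=
          mul_le_mul_of_nonneg_left hd2 (abs_nonneg _)
      _ = (u*a)⁻¹^3*(E - u*e) := by rw [mul_one, abs_of_nonneg (by positivity)]
  have hrw3 : 3*(u*a)⁻¹^5*E - 3*a⁻¹*(u*a)⁻¹^4*e - 2*a⁻¹^3*(u*a)⁻¹^2*e
      = (u*a)⁻¹^5*(3*(E - u*e) - 2*u^3*e) := by
    field_simp
  have habs3 : |xi*xj*(3*(u*a)⁻¹^5*E - 3*a⁻¹*(u*a)⁻¹^4*e - 2*a⁻¹^3*(u*a)⁻¹^2*e)|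
      ≤ (u*a)⁻¹^3*(3*(E - u*e) + 2*u^3*e) := by
    rw [hrw3, abs_mul, abs_mul]
    have h5 : |3*(E - u*e) - 2*u^3*e| ≤ 3*(E - u*e) + 2*u^3*e := by
      calc |3*(E - u*e) - 2*u^3*e| ≤ |3*(E-u*e)| + |2*u^3*e| := abs_sub _ _
        _ = 3*(E - u*e) + 2*u^3*e := by
            rw [abs_of_nonneg (by positivity), abs_of_nonneg (by positivity)]
    calc |xi| * |xj| * |(u*a)⁻¹^5*(3*(E - u*e) - 2*u^3*e)|
        ≤ (u*a) * (u*a) * ((u*a)⁻¹^5*(3*(E - u*e) + 2*u^3*e)) := by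
          apply mul_le_mul
          · exact mul_le_mul hxi hxj (abs_nonneg _) hr.le
          · rw [abs_mul, abs_of_nonneg (by positivity : (0:ℝ) ≤ (u*a)⁻¹^5)]
            exact mul_le_mul_of_nonneg_left h5 (by positivity)
          · exact abs_nonneg _
          · positivity
      _ = (u*a)⁻¹^3*(3*(E - u*e) + 2*u^3*e) := by
          field_simp
  have key : 2*a⁻¹^3*e + (u*a)⁻¹^3*(E - u*e) + (u*a)⁻¹^3*(3*(E - u*e) + 2*u^3*e) ≤ 8 * a⁻¹^3 := by
    have hua : (u*a)⁻¹^3 = u⁻¹^3 * a⁻¹^3 := by rw [mul_inv]; ring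
    have huu : u⁻¹^3 * u^3 = 1 := by field_simp
    have hA : 0 < a⁻¹^3 := by positivity
    have hU : 0 < u⁻¹^3 := by positivity
    rw [hua]
    have k1 : u⁻¹^3 * (E - u*e) ≤ 1 := by
      calc u⁻¹^3 * (E - u*e) ≤ u⁻¹^3 * u^3 := mul_le_mul_of_nonneg_left h2 hU.le
        _ = 1 := huu
    have k2 : u⁻¹^3 * (u^3*e) = e := by field_simp
    nlinarith [mul_le_mul_of_nonneg_right k1 hA.le, hA, hU.le, he0.le, he1,
      mul_le_mul_of_nonneg_right he1 hA.le]
  calc |2*a⁻¹^3*e*d1 + (-(u*a)⁻¹^3*E + (u*a)⁻¹^2*a⁻¹*e)*d2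
      + xi*xj*(3*(u*a)⁻¹^5*E - 3*a⁻¹*(u*a)⁻¹^4*e - 2*a⁻¹^3*(u*a)⁻¹^2*e)|
      ≤ |2*a⁻¹^3*e*d1| + |(-(u*a)⁻¹^3*E + (u*a)⁻¹^2*a⁻¹*e)*d2|
        + |xi*xj*(3*(u*a)⁻¹^5*E - 3*a⁻¹*(u*a)⁻¹^4*e - 2*a⁻¹^3*(u*a)⁻¹^2*e)| := by
          exact (abs_add_le _ _).trans (by gcongr; exact abs_add_le _ _)
    _ ≤ 2*a⁻¹^3*e + (u*a)⁻¹^3*(E - u*e) + (u*a)⁻¹^3*(3*(E - u*e) + 2*u^3*e) := by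
        gcongr
    _ ≤ 8 * a⁻¹^3 := key


lemma est_coreR {a u E e xi xj d1 d2 : ℝ} (ha : 0 < a) (hu : 0 < u)
    (he0 : 0 < e) (he1 : e ≤ 1) (h1me : 1 - e ≤ u^2) (hE0 : 0 ≤ E) (hE1 : E ≤ 1)
    (hEu : E ≤ u) (hue : u * e ≤ E) (hu3e : u^3 * e ≤ 1)
    (hxi : |xi| ≤ u*a) (hxj : |xj| ≤ u*a) (hd1 : |d1| ≤ 1) (hd2 : |d2| ≤ 1) :
    |2*a⁻¹^3*e*d1 + (-(u*a)⁻¹^3*E + (u*a)⁻¹^2*a⁻¹*e)*d2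
      + xi*xj*(3*(u*a)⁻¹^5*E - 3*a⁻¹*(u*a)⁻¹^4*e - 2*a⁻¹^3*(u*a)⁻¹^2*e)|
      ≤ 8 * (u*a)⁻¹^3 := by
  have hr : 0 < u*a := mul_pos hu ha
  have h2 : E - u*e ≤ u^3 := by nlinarith [mul_le_mul_of_nonneg_left h1me hu.le, hEu]
  have h0 : 0 ≤ E - u*e := by linarith
  have habs1 : |2*a⁻¹^3*e*d1| ≤ 2*a⁻¹^3*e := by
    rw [abs_mul]
    calc |2*a⁻¹^3*e| * |d1| ≤ |2*a⁻¹^3*e| * 1 := by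
          exact mul_le_mul_of_nonneg_left hd1 (abs_nonneg _)
      _ = 2*a⁻¹^3*e := by rw [mul_one, abs_of_pos (by positivity)]
  have hrw2 : -(u*a)⁻¹^3*E + (u*a)⁻¹^2*a⁻¹*e = -((u*a)⁻¹^3*(E - u*e)) := by
    field_simp
    ring
  have habs2 : |(-(u*a)⁻¹^3*E + (u*a)⁻¹^2*a⁻¹*e)*d2| ≤ (u*a)⁻¹^3*(E - u*e) := by
    rw [hrw2, abs_mul, abs_neg]
    calc |(u*a)⁻¹^3*(E - u*e)| * |d2| ≤ |(u*a)⁻¹^3*(E - u*e)| * 1 :=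
          mul_le_mul_of_nonneg_left hd2 (abs_nonneg _)
      _ = (u*a)⁻¹^3*(E - u*e) := by rw [mul_one, abs_of_nonneg (by positivity)]
  have hrw3 : 3*(u*a)⁻¹^5*E - 3*a⁻¹*(u*a)⁻¹^4*e - 2*a⁻¹^3*(u*a)⁻¹^2*e
      = (u*a)⁻¹^5*(3*(E - u*e) - 2*u^3*e) := by
    field_simp
  have habs3 : |xi*xj*(3*(u*a)⁻¹^5*E - 3*a⁻¹*(u*a)⁻¹^4*e - 2*a⁻¹^3*(u*a)⁻¹^2*e)|
      ≤ (u*a)⁻¹^3*(3*(E - u*e) + 2*u^3*e) := by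
    rw [hrw3, abs_mul, abs_mul]
    have h5 : |3*(E - u*e) - 2*u^3*e| ≤ 3*(E - u*e) + 2*u^3*e := by
      calc |3*(E - u*e) - 2*u^3*e| ≤ |3*(E-u*e)| + |2*u^3*e| := abs_sub _ _
        _ = 3*(E - u*e) + 2*u^3*e := by
            rw [abs_of_nonneg (by positivity), abs_of_nonneg (by positivity)]
    calc |xi| * |xj| * |(u*a)⁻¹^5*(3*(E - u*e) - 2*u^3*e)|
        ≤ (u*a) * (u*a) * ((u*a)⁻¹^5*(3*(E - u*e) + 2*u^3*e)) := by
          apply mul_le_mul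
          · exact mul_le_mul hxi hxj (abs_nonneg _) hr.le
          · rw [abs_mul, abs_of_nonneg (by positivity : (0:ℝ) ≤ (u*a)⁻¹^5)]
            exact mul_le_mul_of_nonneg_left h5 (by positivity)
          · exact abs_nonneg _
          · positivity
      _ = (u*a)⁻¹^3*(3*(E - u*e) + 2*u^3*e) := by
          field_simp
  have key : 2*a⁻¹^3*e + (u*a)⁻¹^3*(E - u*e) + (u*a)⁻¹^3*(3*(E - u*e) + 2*u^3*e) ≤ 8 * (u*a)⁻¹^3 := by
    have hR : 0 < (u*a)⁻¹^3 := by positivity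
    have k1 : a⁻¹^3*e = (u*a)⁻¹^3*(u^3*e) := by
      field_simp
    have k2 : E - u*e ≤ 1 := by nlinarith
    nlinarith [hR, hu3e, k2, mul_le_mul_of_nonneg_left hu3e hR.le,
      mul_le_mul_of_nonneg_left k2 hR.le]
  calc |2*a⁻¹^3*e*d1 + (-(u*a)⁻¹^3*E + (u*a)⁻¹^2*a⁻¹*e)*d2
      + xi*xj*(3*(u*a)⁻¹^5*E - 3*a⁻¹*(u*a)⁻¹^4*e - 2*a⁻¹^3*(u*a)⁻¹^2*e)|
      ≤ |2*a⁻¹^3*e*d1| + |(-(u*a)⁻¹^3*E + (u*a)⁻¹^2*a⁻¹*e)*d2|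
        + |xi*xj*(3*(u*a)⁻¹^5*E - 3*a⁻¹*(u*a)⁻¹^4*e - 2*a⁻¹^3*(u*a)⁻¹^2*e)| := by
          exact (abs_add_le _ _).trans (by gcongr; exact abs_add_le _ _)
    _ ≤ 2*a⁻¹^3*e + (u*a)⁻¹^3*(E - u*e) + (u*a)⁻¹^3*(3*(E - u*e) + 2*u^3*e) := by
        gcongr
    _ ≤ 8 * (u*a)⁻¹^3 := key


lemma oC_pos : 0 < oC := by
  unfold oC
  positivity

lemma heatKernel_eq {t : ℝ} (ht : 0 < t) (x : EuclideanSpace ℝ (Fin 3)) :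
    heatKernel t x = 2*oC*((2*Real.sqrt t)⁻¹^3) * Real.exp (-(‖x‖/(2*Real.sqrt t))^2) := by
  have hA : 0 < 2*Real.sqrt t := by positivity
  have hsq : (2*Real.sqrt t)^2 = 4*t := by
    rw [mul_pow, Real.sq_sqrt ht.le]; ring
  have hexp : -‖x‖ ^ 2 / (4 * t) = -(‖x‖/(2*Real.sqrt t))^2 := by
    rw [div_pow, hsq]
    ring
  have hcoef : (4 * Real.pi * t) ^ (-(3:ℝ)/2) = 2*oC*((2*Real.sqrt t)⁻¹^3) := by
    have h4t : (4:ℝ) * Real.pi * t = Real.pi * (2*Real.sqrt t)^2 := by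
      rw [hsq]; ring
    rw [h4t, show (-(3:ℝ)/2) = -((3:ℝ)/2) by ring,
      Real.rpow_neg (by positivity), Real.mul_rpow Real.pi_pos.le (by positivity),
      ← Real.rpow_natCast (2*Real.sqrt t) 2, ← Real.rpow_mul hA.le]
    rw [show ((2:ℕ):ℝ) * ((3:ℝ)/2) = ((3:ℕ):ℝ) by norm_num, Real.rpow_natCast]
    rw [mul_inv, oC]
    rw [inv_pow]
    field_simp
  rw [heatKernel, hexp, hcoef]




lemma oseenPhi_eq (t : ℝ) (x : EuclideanSpace ℝ (Fin 3)) :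
    oseenPhi t x = fA (2*Real.sqrt t) (‖x‖^2) := by
  unfold oseenPhi fA oC Egau
  rw [Real.sqrt_sq (norm_nonneg x), mul_assoc]

lemma phi_hasFDerivAt {t : ℝ} (ht : 0 < t) {z : EuclideanSpace ℝ (Fin 3)} (hz : z ≠ 0) :
    HasFDerivAt (fun w => oseenPhi t w)
      (fA' (2*Real.sqrt t) (‖z‖^2) • (2 • innerSL ℝ z)) z := by
  have ha : 0 < 2*Real.sqrt t := by positivity
  have hz' : 0 < ‖z‖ := norm_pos_iff.2 hz
  have hs : 0 < ‖z‖^2 := by positivity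
  have hq : HasFDerivAt (fun w : EuclideanSpace ℝ (Fin 3) => ‖w‖^2) (2 • innerSL ℝ z) z :=
    (hasStrictFDerivAt_norm_sq z).hasFDerivAt
  have h := (fA_hasDerivAt ha hs).comp_hasFDerivAt z hq
  have hfe : (fun w => oseenPhi t w)
      = (fA (2*Real.sqrt t) ∘ fun w : EuclideanSpace ℝ (Fin 3) => ‖w‖^2) :=
    funext fun w => oseenPhi_eq t w
  rw [hfe]
  exact h

lemma fderiv_phi_apply {t : ℝ} (ht : 0 < t) {z : EuclideanSpace ℝ (Fin 3)} (hz : z ≠ 0)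
    (j : Fin 3) :
    fderiv ℝ (fun w => oseenPhi t w) z (EuclideanSpace.single j 1)
      = fA' (2*Real.sqrt t) (‖z‖^2) * (2 * z j) := by
  rw [(phi_hasFDerivAt ht hz).fderiv]
  simp [ContinuousLinearMap.smul_apply, EuclideanSpace.inner_single_right, real_inner_comm]

lemma psi_hasFDerivAt {t : ℝ} (ht : 0 < t) {x : EuclideanSpace ℝ (Fin 3)} (hx : x ≠ 0)
    (j : Fin 3) :
    HasFDerivAt (fun z : EuclideanSpace ℝ (Fin 3) => fA' (2*Real.sqrt t) (‖z‖^2) * (2 * z j))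
      ((fA' (2*Real.sqrt t) (‖x‖^2)) • ((2:ℝ) • (EuclideanSpace.proj j : EuclideanSpace ℝ (Fin 3) →L[ℝ] ℝ))
        + (2 * x j) • (fA'' (2*Real.sqrt t) (‖x‖^2) • (2 • innerSL ℝ x))) x := by
  have ha : 0 < 2*Real.sqrt t := by positivity
  have hx' : 0 < ‖x‖ := norm_pos_iff.2 hx
  have hs : 0 < ‖x‖^2 := by positivity
  have hq : HasFDerivAt (fun w : EuclideanSpace ℝ (Fin 3) => ‖w‖^2) (2 • innerSL ℝ x) x :=
    (hasStrictFDerivAt_norm_sq x).hasFDerivAt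
  have hc : HasFDerivAt (fun z : EuclideanSpace ℝ (Fin 3) => fA' (2*Real.sqrt t) (‖z‖^2))
      (fA'' (2*Real.sqrt t) (‖x‖^2) • (2 • innerSL ℝ x)) x :=
    by have h := (fA'_hasDerivAt ha hs).comp_hasFDerivAt x hq; exact h
  have hd : HasFDerivAt (fun z : EuclideanSpace ℝ (Fin 3) => (2:ℝ) * z j)
      ((2:ℝ) • (EuclideanSpace.proj j : EuclideanSpace ℝ (Fin 3) →L[ℝ] ℝ)) x :=
    ((EuclideanSpace.proj j : EuclideanSpace ℝ (Fin 3) →L[ℝ] ℝ).hasFDerivAt).const_mul 2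
  exact hc.mul hd

lemma oseenT_eq {t : ℝ} (ht : 0 < t) {x : EuclideanSpace ℝ (Fin 3)} (hx : x ≠ 0) (i j : Fin 3) :
    oseenT t x i j = heatKernel t x * (if i = j then 1 else 0)
      + (fA' (2*Real.sqrt t) (‖x‖^2) * (2 * (if j = i then 1 else 0))
        + (2 * x j) * (fA'' (2*Real.sqrt t) (‖x‖^2) * (2 * x i))) := by
  unfold oseenT
  congr 1
  have hnb : (fun z => fderiv ℝ (fun w => oseenPhi t w) z (EuclideanSpace.single j 1))
      =ᶠ[nhds x] (fun z : EuclideanSpace ℝ (Fin 3) => fA' (2*Real.sqrt t) (‖z‖^2) * (2 * z j)) := by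
    filter_upwards [isOpen_compl_singleton.mem_nhds (by simpa using hx)] with z hz
    exact fderiv_phi_apply ht hz j
  rw [hnb.fderiv_eq, (psi_hasFDerivAt ht hx j).fderiv]
  simp [ContinuousLinearMap.add_apply, ContinuousLinearMap.smul_apply,
    EuclideanSpace.inner_single_right, EuclideanSpace.single_apply, real_inner_comm]


theorem stmt_17 :
    ∃ c > 0, ∀ t : ℝ, 0 < t → ∀ x : EuclideanSpace ℝ (Fin 3), x ≠ 0 → ∀ i j : Fin 3,
      |oseenT t x i j| ≤ c * (‖x‖ + t ^ ((1:ℝ)/2)) ^ (-(3:ℝ)) := by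
  refine ⟨64 * oC, by nlinarith [oC_pos], ?_⟩
  intro t ht x hx i j
  have ha : 0 < 2 * Real.sqrt t := by positivity
  have hr : 0 < ‖x‖ := norm_pos_iff.2 hx
  have hu : 0 < ‖x‖ / (2 * Real.sqrt t) := div_pos hr ha
  have hua : ‖x‖ / (2 * Real.sqrt t) * (2 * Real.sqrt t) = ‖x‖ := div_mul_cancel₀ _ ha.ne'
  have he0 : 0 < Real.exp (-(‖x‖ / (2 * Real.sqrt t))^2) := Real.exp_pos _
  have he1 : Real.exp (-(‖x‖ / (2 * Real.sqrt t))^2) ≤ 1 :=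
    Real.exp_le_one_iff.2 (by nlinarith [sq_nonneg (‖x‖ / (2 * Real.sqrt t))])
  have h1me := one_sub_exp (u := ‖x‖ / (2 * Real.sqrt t))
  have hE0 := egau_nonneg (‖x‖ / (2 * Real.sqrt t))
  have hE1 := egau_le_one (‖x‖ / (2 * Real.sqrt t))
  have hEu := egau_le_self hu.le
  have hue := egau_ge hu.le
  have hu3e := u3exp hu.le
  have hxi : |x i| ≤ ‖x‖ / (2 * Real.sqrt t) * (2 * Real.sqrt t) := by
    rw [hua]; exact coord_le_norm x i
  have hxj : |x j| ≤ ‖x‖ / (2 * Real.sqrt t) * (2 * Real.sqrt t) := by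
    rw [hua]; exact coord_le_norm x j
  have hd1 : |(if i = j then (1:ℝ) else 0)| ≤ 1 := by split <;> simp
  have hd2 : |(if j = i then (1:ℝ) else 0)| ≤ 1 := by split <;> simp
  have hcoreA := est_coreA ha hu he0 he1 h1me hE0 hE1 hEu hue hu3e hxi hxj hd1 hd2
  have hcoreR := est_coreR ha hu he0 he1 h1me hE0 hE1 hEu hue hu3e hxi hxj hd1 hd2
  rw [hua] at hcoreA hcoreR
  have hform : oseenT t x i j
      = oC * (2*(2 * Real.sqrt t)⁻¹^3*Real.exp (-(‖x‖ / (2 * Real.sqrt t))^2)*(if i = j then (1:ℝ) else 0)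
        + (-‖x‖⁻¹^3*Egau (‖x‖ / (2 * Real.sqrt t))
            + ‖x‖⁻¹^2*(2 * Real.sqrt t)⁻¹*Real.exp (-(‖x‖ / (2 * Real.sqrt t))^2))*(if j = i then (1:ℝ) else 0)
        + (x i)*(x j)*(3*‖x‖⁻¹^5*Egau (‖x‖ / (2 * Real.sqrt t))
            - 3*(2 * Real.sqrt t)⁻¹*‖x‖⁻¹^4*Real.exp (-(‖x‖ / (2 * Real.sqrt t))^2)
            - 2*(2 * Real.sqrt t)⁻¹^3*‖x‖⁻¹^2*Real.exp (-(‖x‖ / (2 * Real.sqrt t))^2))) := by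
    rw [oseenT_eq ht hx i j, heatKernel_eq ht x, fA', fA'', Real.sqrt_sq (norm_nonneg x)]
    ring
  have hTA : |oseenT t x i j| ≤ 8 * oC * (2 * Real.sqrt t)⁻¹^3 := by
    rw [hform, abs_mul, abs_of_pos oC_pos]
    calc oC * |_| ≤ oC * (8 * (2 * Real.sqrt t)⁻¹^3) :=
          mul_le_mul_of_nonneg_left hcoreA oC_pos.le
      _ = 8 * oC * (2 * Real.sqrt t)⁻¹^3 := by ring
  have hTR : |oseenT t x i j| ≤ 8 * oC * ‖x‖⁻¹^3 := by
    rw [hform, abs_mul, abs_of_pos oC_pos]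
    calc oC * |_| ≤ oC * (8 * ‖x‖⁻¹^3) :=
          mul_le_mul_of_nonneg_left hcoreR oC_pos.le
      _ = 8 * oC * ‖x‖⁻¹^3 := by ring
  have hb : 0 < ‖x‖ + Real.sqrt t := by positivity
  have hrpow : (‖x‖ + t ^ ((1:ℝ)/2)) ^ (-(3:ℝ)) = ((‖x‖ + Real.sqrt t)^3)⁻¹ := by
    rw [← Real.sqrt_eq_rpow, Real.rpow_neg hb.le,
      show ((3:ℝ)) = ((3:ℕ):ℝ) by norm_num, Real.rpow_natCast]
  rw [hrpow, ← div_eq_mul_inv, le_div_iff₀ (by positivity)]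
  rcases le_total ‖x‖ (2 * Real.sqrt t) with hc | hc
  · have h1 : ‖x‖ + Real.sqrt t ≤ 2 * (2 * Real.sqrt t) := by
      nlinarith [Real.sqrt_nonneg t]
    calc |oseenT t x i j| * (‖x‖ + Real.sqrt t)^3
        ≤ (8 * oC * (2 * Real.sqrt t)⁻¹^3) * (2 * (2 * Real.sqrt t))^3 := by
          apply mul_le_mul hTA (pow_le_pow_left₀ hb.le h1 3) (by positivity)
            (mul_nonneg (mul_nonneg (by norm_num) oC_pos.le) (by positivity))
      _ = 64 * oC := by
          field_simp
          ring
  · have h1 : ‖x‖ + Real.sqrt t ≤ 2 * ‖x‖ := by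
      nlinarith [Real.sqrt_nonneg t]
    calc |oseenT t x i j| * (‖x‖ + Real.sqrt t)^3
        ≤ (8 * oC * ‖x‖⁻¹^3) * (2 * ‖x‖)^3 := by
          apply mul_le_mul hTR (pow_le_pow_left₀ hb.le h1 3) (by positivity)
            (mul_nonneg (mul_nonneg (by norm_num) oC_pos.le) (by positivity))
      _ = 64 * oC := by
          field_simp
          ring
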